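/- The heat flux λ ↦ J_λ is continuously differentiable on ℝ, with derivative J_λ' = -2λ·(1/4π)∫_{-π}^{π} j(cos k)·sin²k/(sin²k+λ²)² dk for λ ≠ 0 and J_0' = 0. -/

import Mathlib

open Real intervalIntegral

noncomputable def planckDensity (r e : ℝ) : ℝ := 1 / (1 + Real.exp (r * e))

noncomputable def fluxDensity (βL βR e : ℝ) : ℝ :=
  e * Real.sqrt (1 - e ^ 2) * (planckDensity βL e - planckDensity βR e)

noncomputable def magneticCorrection (lam e : ℝ) : ℝ :=
  if lam = 0 then 1 else (1 - e ^ 2) / (1 - e ^ 2 + lam ^ 2)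

noncomputable def heatFlux (βL βR lam : ℝ) : ℝ :=
  (1 / (4 * Real.pi)) *
    ∫ k in (-Real.pi)..Real.pi, fluxDensity βL βR (Real.cos k) * magneticCorrection lam (Real.cos k)

noncomputable def heatFluxDeriv (βL βR lam : ℝ) : ℝ :=
  if lam = 0 then 0 else
    -2 * lam * ((1 / (4 * Real.pi)) *
      ∫ k in (-Real.pi)..Real.pi,
        fluxDensity βL βR (Real.cos k) * Real.sin k ^ 2 / (Real.sin k ^ 2 + lam ^ 2) ^ 2)

namespace HeatFluxAux

noncomputable def Fint (βL βR l k : ℝ) : ℝ :=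
  fluxDensity βL βR (Real.cos k) * magneticCorrection l (Real.cos k)

noncomputable def Fder (βL βR l k : ℝ) : ℝ :=
  -2 * l * (fluxDensity βL βR (Real.cos k) * Real.sin k ^ 2 / (Real.sin k ^ 2 + l ^ 2) ^ 2)

lemma planck_bounds (r e : ℝ) : 0 ≤ planckDensity r e ∧ planckDensity r e ≤ 1 := by
  unfold planckDensity
  have h : (0:ℝ) < 1 + Real.exp (r * e) := by positivity
  refine ⟨by positivity, ?_⟩
  rw [div_le_one h]
  nlinarith [Real.exp_pos (r * e)]

lemma planck_cont (r : ℝ) : Continuous (fun e => planckDensity r e) := by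
  unfold planckDensity
  exact continuous_const.div (by continuity) (fun e => by positivity)

lemma flux_cont (βL βR : ℝ) : Continuous (fluxDensity βL βR) := by
  unfold fluxDensity
  exact (continuous_id.mul (Real.continuous_sqrt.comp (by continuity))).mul
    ((planck_cont βL).sub (planck_cont βR))

lemma flux_abs (βL βR k : ℝ) : |fluxDensity βL βR (Real.cos k)| ≤ |Real.sin k| := by
  unfold fluxDensity
  have hs : Real.sqrt (1 - Real.cos k ^ 2) = |Real.sin k| := by
    rw [← Real.sin_sq, Real.sqrt_sq_eq_abs]
  have hd : |planckDensity βL (Real.cos k) - planckDensity βR (Real.cos k)| ≤ 1 := by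
    have h1 := planck_bounds βL (Real.cos k)
    have h2 := planck_bounds βR (Real.cos k)
    rw [abs_le]; constructor <;> linarith [h1.1, h1.2, h2.1, h2.2]
  rw [abs_mul, abs_mul, hs, abs_abs]
  have hc : |Real.cos k| ≤ 1 := Real.abs_cos_le_one k
  calc |Real.cos k| * |Real.sin k| * |planckDensity βL (Real.cos k) - planckDensity βR (Real.cos k)|
      ≤ 1 * |Real.sin k| * 1 := by gcongr <;> simp [hc, hd]
    _ = |Real.sin k| := by ring

lemma flux_zero (βL βR : ℝ) {k : ℝ} (h : Real.sin k = 0) :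
    fluxDensity βL βR (Real.cos k) = 0 := by
  have := flux_abs βL βR k
  rw [h, abs_zero] at this
  exact abs_nonpos_iff.mp this

lemma Fint_eq (βL βR : ℝ) {k : ℝ} (hs : Real.sin k ≠ 0) (l : ℝ) :
    Fint βL βR l k =
      fluxDensity βL βR (Real.cos k) * (Real.sin k ^ 2 / (Real.sin k ^ 2 + l ^ 2)) := by
  unfold Fint magneticCorrection
  rw [← Real.sin_sq]
  split_ifs with h
  · subst h
    norm_num [div_self (pow_ne_zero 2 hs)]
  · rfl

lemma hasDeriv_Fint (βL βR l k : ℝ) :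
    HasDerivAt (fun l => Fint βL βR l k) (Fder βL βR l k) l := by
  by_cases hs : Real.sin k = 0
  · have hf := flux_zero βL βR hs
    have h1 : (fun l => Fint βL βR l k) = fun _ => (0:ℝ) := by
      funext x; unfold Fint; rw [hf]; ring
    have h2 : Fder βL βR l k = 0 := by unfold Fder; rw [hf]; ring
    rw [h1, h2]
    exact hasDerivAt_const l 0
  · have hs2 : (0:ℝ) < Real.sin k ^ 2 := by positivity
    have hden : Real.sin k ^ 2 + l ^ 2 ≠ 0 := by positivity
    have h1 : HasDerivAt (fun x : ℝ => Real.sin k ^ 2 + x ^ 2) (2 * l) l := by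
      simpa using (hasDerivAt_pow 2 l).const_add (Real.sin k ^ 2)
    have h2 := (hasDerivAt_const l (Real.sin k ^ 2)).div h1 hden
    have h3 := HasDerivAt.const_mul (fluxDensity βL βR (Real.cos k)) h2
    have h4 : (fun x => fluxDensity βL βR (Real.cos k) *
        (Real.sin k ^ 2 / (Real.sin k ^ 2 + x ^ 2))) = fun x => Fint βL βR x k := by
      funext x; exact (Fint_eq βL βR hs x).symm
    simp only [Pi.div_apply] at h3
    rw [h4] at h3
    refine h3.congr_deriv ?_
    unfold Fder
    field_simp
    ring

lemma Fder_abs (βL βR l k : ℝ) : |Fder βL βR l k| ≤ 2 := by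
  by_cases hs : Real.sin k = 0
  · have hf := flux_zero βL βR hs
    unfold Fder
    rw [hf]
    norm_num
  · set a := |Real.sin k| with ha_def
    set b := |l| with hb_def
    have ha : 0 ≤ a := abs_nonneg _
    have hb : 0 ≤ b := abs_nonneg _
    have key : 2 * b * a ^ 3 ≤ (a ^ 2 + b ^ 2) ^ 2 := by
      nlinarith [mul_nonneg (sq_nonneg a) (sq_nonneg (a - b)), sq_nonneg (a * b),
        sq_nonneg (b * b)]
    have hj := flux_abs βL βR k
    have hs2 : Real.sin k ^ 2 = a ^ 2 := (sq_abs _).symm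
    have hl2 : l ^ 2 = b ^ 2 := (sq_abs _).symm
    have ha0 : 0 < a := abs_pos.mpr hs
    have hd : (0:ℝ) < (a ^ 2 + b ^ 2) ^ 2 := by positivity
    have h1 : |Fder βL βR l k| =
        2 * b * (|fluxDensity βL βR (Real.cos k)| * a ^ 2) / (a ^ 2 + b ^ 2) ^ 2 := by
      unfold Fder
      rw [hs2, hl2, abs_mul, abs_div, abs_mul, abs_mul]
      rw [abs_of_nonneg (le_of_lt hd), abs_of_nonneg (sq_nonneg a)]
      norm_num
      ring
    rw [h1, div_le_iff₀ hd]
    have h2 : 0 ≤ 2 * b * a ^ 2 * (a - |fluxDensity βL βR (Real.cos k)|) := by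
      apply mul_nonneg
      · positivity
      · linarith
    nlinarith [sq_nonneg (a ^ 2 + b ^ 2)]

lemma cont_Fint (βL βR l : ℝ) : Continuous (fun k => Fint βL βR l k) := by
  unfold Fint magneticCorrection
  by_cases h : l = 0
  · simp only [h, if_pos rfl]
    exact ((flux_cont βL βR).comp Real.continuous_cos).mul continuous_const
  · simp only [if_neg h]
    refine ((flux_cont βL βR).comp Real.continuous_cos).mul (Continuous.div (by continuity)
      (by continuity) fun k => ?_)
    have h1 : Real.sin k ^ 2 = 1 - Real.cos k ^ 2 := Real.sin_sq k
    have h2 : (0:ℝ) < Real.sin k ^ 2 + l ^ 2 := by positivity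
    rw [h1] at h2
    linarith

lemma cont_Fder_k (βL βR l : ℝ) : Continuous (fun k => Fder βL βR l k) := by
  by_cases h : l = 0
  · have : (fun k => Fder βL βR l k) = fun _ => (0:ℝ) := by
      funext k; unfold Fder; rw [h]; ring
    rw [this]; exact continuous_const
  · refine continuous_const.mul (Continuous.div ?_ (by continuity) fun k => ?_)
    · exact ((flux_cont βL βR).comp Real.continuous_cos).mul (by continuity)
    · have h2 : (0:ℝ) < (Real.sin k ^ 2 + l ^ 2) ^ 2 := by positivity
      exact ne_of_gt h2

lemma cont_Fder_l (βL βR k : ℝ) : Continuous (fun l => Fder βL βR l k) := by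
  by_cases hs : Real.sin k = 0
  · have hf := flux_zero βL βR hs
    have : (fun l => Fder βL βR l k) = fun _ => (0:ℝ) := by
      funext l; unfold Fder; rw [hf]; ring
    rw [this]; exact continuous_const
  · have hs2 : (0:ℝ) < Real.sin k ^ 2 := by positivity
    refine (continuous_const.mul continuous_id).mul
      (Continuous.div (by continuity) (by continuity) fun l => ?_)
    have h2 : (0:ℝ) < (Real.sin k ^ 2 + l ^ 2) ^ 2 := by positivity
    exact ne_of_gt h2

lemma key (βL βR lam : ℝ) :
    HasDerivAt (fun l => ∫ k in (-Real.pi)..Real.pi, Fint βL βR l k)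
      (∫ k in (-Real.pi)..Real.pi, Fder βL βR lam k) lam := by
  have h := intervalIntegral.hasDerivAt_integral_of_dominated_loc_of_deriv_le
    (F := fun l k => Fint βL βR l k) (F' := fun l k => Fder βL βR l k)
    (bound := fun _ => (2:ℝ)) (μ := MeasureTheory.volume) (a := -Real.pi) (b := Real.pi)
    (x₀ := lam) Filter.univ_mem
    (Filter.Eventually.of_forall fun l => (cont_Fint βL βR l).aestronglyMeasurable)
    ((cont_Fint βL βR lam).intervalIntegrable _ _)
    ((cont_Fder_k βL βR lam).aestronglyMeasurable)
    (MeasureTheory.ae_of_all _ fun k _ l _ => by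
      rw [Real.norm_eq_abs]; exact Fder_abs βL βR l k)
    _root_.intervalIntegrable_const
    (MeasureTheory.ae_of_all _ fun k _ l _ => hasDeriv_Fint βL βR l k)
  exact h.2

lemma contD (βL βR : ℝ) :
    Continuous fun l => ∫ k in (-Real.pi)..Real.pi, Fder βL βR l k := by
  refine intervalIntegral.continuous_of_dominated_interval
    (fun l => (cont_Fder_k βL βR l).aestronglyMeasurable)
    (fun l => MeasureTheory.ae_of_all _ fun k _ => ?_)
    (_root_.intervalIntegrable_const (c := (2:ℝ)))
    (MeasureTheory.ae_of_all _ fun k _ => cont_Fder_l βL βR k)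
  rw [Real.norm_eq_abs]; exact Fder_abs βL βR l k

lemma heatFluxDeriv_eq (βL βR lam : ℝ) :
    heatFluxDeriv βL βR lam =
      (1 / (4 * Real.pi)) * ∫ k in (-Real.pi)..Real.pi, Fder βL βR lam k := by
  unfold heatFluxDeriv Fder
  split_ifs with h
  · subst h
    simp
  · rw [intervalIntegral.integral_const_mul]
    ring

end HeatFluxAux

open HeatFluxAux in
theorem heatFlux_C1 (βL βR : ℝ) (hL : 0 < βL) (hLR : βL < βR) :
    (∀ lam : ℝ, HasDerivAt (fun l => heatFlux βL βR l) (heatFluxDeriv βL βR lam) lam) ∧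
    Continuous (fun lam => heatFluxDeriv βL βR lam) := by
  constructor
  · intro lam
    have h := HasDerivAt.const_mul (1 / (4 * Real.pi)) (key βL βR lam)
    rw [heatFluxDeriv_eq βL βR lam]
    exact h
  · have h : (fun lam => heatFluxDeriv βL βR lam) =
        fun lam => (1 / (4 * Real.pi)) * ∫ k in (-Real.pi)..Real.pi, Fder βL βR lam k :=
      funext fun lam => heatFluxDeriv_eq βL βR lam
    rw [h]
    exact continuous_const.mul (contD βL βR)
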